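/- Let $h : \mathbb{R}^p \to \mathbb{R}^p$ be differentiable, $w_0 \in \mathbb{R}^p$, and $L, R > 0$, $0 < \epsilon \le \min\{R, L^{-1}\}$. Suppose (I) $\|h(w_0)\|_\infty \le \epsilon/2$; (II) the Jacobian satisfies $\nabla h(w_0) = I$; (III) $\|\nabla h(w) - \nabla h(w_0)\|_{\infty,\infty} \le L \|w - w_0\|_\infty$ for all $w$ with $\|w - w_0\|_\infty \le R$. Then $h$ has a zero $\hat{w}$ with $\|\hat{w} - w_0\|_\infty \le \epsilon$. -/

import Mathlib

/-- The Jacobian matrix of a map `h : ℝᵖ → ℝᵖ`, with entries `(∇h)_{jℓ} = ∂h_j/∂w_ℓ`. -/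
noncomputable def jacobian {p : ℕ} (h : (Fin p → ℝ) → (Fin p → ℝ)) (w : Fin p → ℝ) :
    Matrix (Fin p) (Fin p) ℝ :=
  fun j ℓ => fderiv ℝ h w (Pi.single ℓ 1) j

lemma fderiv_apply_jac {p : ℕ} (h : (Fin p → ℝ) → (Fin p → ℝ))
    (w v : Fin p → ℝ) (j : Fin p) :
    fderiv ℝ h w v j = ∑ ℓ, v ℓ * jacobian h w j ℓ := by
  have hv : v = ∑ ℓ, v ℓ • (Pi.single ℓ 1 : Fin p → ℝ) := by
    ext i
    simp [Pi.single_apply]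
  conv_lhs => rw [hv]
  rw [map_sum]
  simp [jacobian, Finset.sum_apply]

theorem stmt5 {p : ℕ} (h : (Fin p → ℝ) → (Fin p → ℝ)) (hdiff : Differentiable ℝ h)
    (w0 : Fin p → ℝ) (L R ε : ℝ) (hL : 0 < L) (hR : 0 < R)
    (hε : 0 < ε) (hεle : ε ≤ min R L⁻¹)
    (h1 : ‖h w0‖ ≤ ε / 2)
    (h2 : jacobian h w0 = 1)
    (h3 : ∀ w : Fin p → ℝ, ‖w - w0‖ ≤ R →
      ∀ j, ∑ ℓ, |jacobian h w j ℓ - jacobian h w0 j ℓ| ≤ L * ‖w - w0‖) :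
    ∃ wstar : Fin p → ℝ, h wstar = 0 ∧ ‖wstar - w0‖ ≤ ε := by
  have hεR : ε ≤ R := hεle.trans (min_le_left _ _)
  have hLε : L * ε ≤ 1 := by
    have := hεle.trans (min_le_right _ _)
    calc L * ε ≤ L * L⁻¹ := by nlinarith
    _ = 1 := mul_inv_cancel₀ hL.ne'
  -- the map g
  set g : (Fin p → ℝ) → (Fin p → ℝ) := fun w => w - h w with hg
  have hgdiff : Differentiable ℝ g := differentiable_id.sub hdiff
  -- fderiv h at w0 applied to v equals v
  have hid : ∀ v : Fin p → ℝ, fderiv ℝ h w0 v = v := by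
    intro v
    funext j
    rw [fderiv_apply_jac h w0 v j, h2]
    simp [Matrix.one_apply, mul_comm]
  -- key derivative bound for g
  have key : ∀ w : Fin p → ℝ, ‖w - w0‖ ≤ R → ∀ v : Fin p → ℝ,
      ‖fderiv ℝ g w v‖ ≤ L * ‖w - w0‖ * ‖v‖ := by
    intro w hw v
    have hfg : fderiv ℝ g w v = v - fderiv ℝ h w v := by
      rw [hg]
      rw [fderiv_fun_sub differentiableAt_fun_id (hdiff w)]
      simp
    rw [hfg]
    have hnn : 0 ≤ L * ‖w - w0‖ * ‖v‖ := by positivity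
    have hsub : v - (fderiv ℝ h w) v = (fderiv ℝ h w0) v - (fderiv ℝ h w) v := by rw [hid]
    rw [hsub, pi_norm_le_iff_of_nonneg hnn]
    intro j
    have : (fderiv ℝ h w0 v - fderiv ℝ h w v) j
        = ∑ ℓ, v ℓ * (jacobian h w0 j ℓ - jacobian h w j ℓ) := by
      simp only [Pi.sub_apply, fderiv_apply_jac, ← Finset.sum_sub_distrib, mul_sub]
    rw [Real.norm_eq_abs, this]
    calc |∑ ℓ, v ℓ * (jacobian h w0 j ℓ - jacobian h w j ℓ)|
        ≤ ∑ ℓ, |v ℓ * (jacobian h w0 j ℓ - jacobian h w j ℓ)| := Finset.abs_sum_le_sum_abs _ _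
      _ ≤ ∑ ℓ, ‖v‖ * |jacobian h w j ℓ - jacobian h w0 j ℓ| := by
          refine Finset.sum_le_sum fun ℓ _ => ?_
          rw [abs_mul, abs_sub_comm]
          exact mul_le_mul_of_nonneg_right (norm_le_pi_norm v ℓ) (abs_nonneg _)
      _ = ‖v‖ * ∑ ℓ, |jacobian h w j ℓ - jacobian h w0 j ℓ| := by rw [Finset.mul_sum]
      _ ≤ ‖v‖ * (L * ‖w - w0‖) := by
          exact mul_le_mul_of_nonneg_left (h3 w hw j) (norm_nonneg v)
      _ = L * ‖w - w0‖ * ‖v‖ := by ring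
  -- op norm bound
  have keyop : ∀ w : Fin p → ℝ, ‖w - w0‖ ≤ R → ‖fderiv ℝ g w‖ ≤ L * ‖w - w0‖ := fun w hw =>
    ContinuousLinearMap.opNorm_le_bound _ (by positivity) (key w hw)
  -- quadratic estimate
  have quad : ∀ w : Fin p → ℝ, ‖w - w0‖ ≤ ε → ‖g w - g w0‖ ≤ L / 2 * ‖w - w0‖ ^ 2 := by
    intro w hw
    set v := w - w0 with hv
    set φ : ℝ → (Fin p → ℝ) := fun t => g (w0 + t • v) - g w0 with hφ
    have hc : ∀ t : ℝ, HasDerivAt (fun t : ℝ => w0 + t • v) v t := by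
      intro t
      simpa using ((hasDerivAt_id t).smul_const v).const_add w0
    have hφ' : ∀ t : ℝ, HasDerivAt φ (fderiv ℝ g (w0 + t • v) v) t := by
      intro t
      exact (((hgdiff (w0 + t • v)).hasFDerivAt.comp_hasDerivAt t (hc t)).sub_const (g w0))
    have bound : ∀ t ∈ Set.Ico (0:ℝ) 1,
        ‖fderiv ℝ g (w0 + t • v) v‖ ≤ (L * ‖v‖ ^ 2) * t := by
      intro t ht
      have h0 : ‖(w0 + t • v) - w0‖ = t * ‖v‖ := by
        rw [add_sub_cancel_left, norm_smul, Real.norm_eq_abs, abs_of_nonneg ht.1]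
      have hR' : ‖(w0 + t • v) - w0‖ ≤ R := by
        rw [h0]
        calc t * ‖v‖ ≤ 1 * ‖v‖ := by
              exact mul_le_mul_of_nonneg_right ht.2.le (norm_nonneg v)
          _ = ‖v‖ := one_mul _
          _ ≤ ε := hw
          _ ≤ R := hεR
      calc ‖fderiv ℝ g (w0 + t • v) v‖ ≤ L * ‖(w0 + t • v) - w0‖ * ‖v‖ :=
            key _ hR' v
        _ = (L * ‖v‖ ^ 2) * t := by rw [h0]; ring
    have hB : ∀ t : ℝ, HasDerivAt (fun t => L * ‖v‖ ^ 2 / 2 * t ^ 2) ((L * ‖v‖ ^ 2) * t) t := by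
      intro t
      have := ((hasDerivAt_pow 2 t).const_mul (L * ‖v‖ ^ 2 / 2))
      refine this.congr_deriv ?_
      ring
    have := image_norm_le_of_norm_deriv_right_le_deriv_boundary
      (fun t _ => (hφ' t).continuousAt.continuousWithinAt)
      (fun t ht => (hφ' t).hasDerivWithinAt)
      (by simp [hφ]) hB bound (Set.right_mem_Icc.2 zero_le_one)
    have hφ1 : φ 1 = g w - g w0 := by simp [hφ, hv]
    rw [hφ1] at this
    calc ‖g w - g w0‖ ≤ L * ‖v‖ ^ 2 / 2 * 1 ^ 2 := this
      _ = L / 2 * ‖w - w0‖ ^ 2 := by rw [← hv]; ring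
  -- self map
  have hself : ∀ w : Fin p → ℝ, ‖w - w0‖ ≤ ε → ‖g w - w0‖ ≤ ε := by
    intro w hw
    have h4 : ‖g w0 - w0‖ ≤ ε / 2 := by
      have : g w0 - w0 = -(h w0) := by simp [hg]
      rw [this, norm_neg]; exact h1
    have h5 : L / 2 * ‖w - w0‖ ^ 2 ≤ ε / 2 := by nlinarith [norm_nonneg (w - w0)]
    calc ‖g w - w0‖ = ‖(g w - g w0) + (g w0 - w0)‖ := by rw [sub_add_sub_cancel]
      _ ≤ ‖g w - g w0‖ + ‖g w0 - w0‖ := norm_add_le _ _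
      _ ≤ ε / 2 + ε / 2 := add_le_add ((quad w hw).trans h5) h4
      _ = ε := by ring
  -- g is 1-Lipschitz on the closed ball
  have hmemR : ∀ z ∈ Metric.closedBall w0 ε, ‖z - w0‖ ≤ R := by
    intro z hz
    rw [Metric.mem_closedBall, dist_eq_norm] at hz
    exact hz.trans hεR
  have hlip : ∀ x ∈ Metric.closedBall w0 ε, ∀ y ∈ Metric.closedBall w0 ε,
      ‖g x - g y‖ ≤ ‖x - y‖ := by
    intro x hx y hy
    have := (convex_closedBall w0 ε).norm_image_sub_le_of_norm_fderiv_le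
      (f := g) (C := 1) (fun z _ => (hgdiff z)) ?_ hy hx
    · simpa using this
    · intro z hz
      refine (keyop z (hmemR z hz)).trans ?_
      have : ‖z - w0‖ ≤ ε := by
        rw [Metric.mem_closedBall, dist_eq_norm] at hz; exact hz
      nlinarith [norm_nonneg (z - w0)]
  -- near-zeros at every scale
  have exist_n : ∀ n : ℕ, ∃ x ∈ Metric.closedBall w0 ε, ‖h x‖ ≤ ε / (n + 1) := by
    intro n
    set t : ℝ := n / (n + 1) with ht
    have hn1 : (0:ℝ) < n + 1 := by positivity
    have ht0 : 0 ≤ t := by positivity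
    have ht1 : t < 1 := by
      rw [ht, div_lt_one hn1]; linarith
    have h1t : 1 - t = 1 / (n + 1) := by
      rw [ht]; field_simp; ring
    set s : Set (Fin p → ℝ) := Metric.closedBall w0 ε with hs
    have hw0s : w0 ∈ s := Metric.mem_closedBall_self hε.le
    haveI : Nonempty s := ⟨⟨w0, hw0s⟩⟩
    haveI : CompleteSpace s := Metric.isClosed_closedBall.completeSpace_coe
    have hmaps : ∀ x : s, w0 + t • (g x.1 - w0) ∈ s := by
      intro x
      simp only [hs, Metric.mem_closedBall, dist_eq_norm]
      have hx : ‖x.1 - w0‖ ≤ ε := by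
        have := x.2; simp only [hs, Metric.mem_closedBall, dist_eq_norm] at this; exact this
      have hgx : ‖g x.1 - w0‖ ≤ ε := hself x.1 hx
      calc ‖w0 + t • (g x.1 - w0) - w0‖ = ‖t • (g x.1 - w0)‖ := by rw [add_sub_cancel_left]
        _ = t * ‖g x.1 - w0‖ := by rw [norm_smul, Real.norm_eq_abs, abs_of_nonneg ht0]
        _ ≤ 1 * ε := mul_le_mul ht1.le hgx (norm_nonneg _) zero_le_one
        _ = ε := one_mul _
    set F : s → s := fun x => ⟨w0 + t • (g x.1 - w0), hmaps x⟩ with hF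
    have hcontr : ContractingWith ⟨t, ht0⟩ F := by
      constructor
      · exact_mod_cast ht1
      · refine LipschitzWith.of_dist_le_mul fun x y => ?_
        have hd1 : dist (F x) (F y) = ‖w0 + t • (g x.1 - w0) - (w0 + t • (g y.1 - w0))‖ := by
          rw [Subtype.dist_eq, dist_eq_norm]
        have hd2 : dist x y = ‖x.1 - y.1‖ := by
          rw [Subtype.dist_eq, dist_eq_norm]
        rw [hd1, hd2]
        have lem : ∀ (a b : Fin p → ℝ), (w0 + t • (a - w0)) - (w0 + t • (b - w0)) = t • (a - b) := by
          intro a b; rw [smul_sub, smul_sub, smul_sub]; abel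
        have heq : w0 + t • (g x.1 - w0) - (w0 + t • (g y.1 - w0)) = t • (g x.1 - g y.1) :=
          lem _ _
        rw [heq, norm_smul, Real.norm_eq_abs, abs_of_nonneg ht0]
        show t * ‖g x.1 - g y.1‖ ≤ t * ‖x.1 - y.1‖
        have hxs : x.1 ∈ Metric.closedBall w0 ε := x.2
        have hys : y.1 ∈ Metric.closedBall w0 ε := y.2
        exact mul_le_mul_of_nonneg_left (hlip x.1 hxs y.1 hys) ht0
    obtain ⟨y, hy, -⟩ := hcontr.exists_fixedPoint (Classical.arbitrary s) (edist_ne_top _ _)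
    have hyfix : w0 + t • (g y.1 - w0) = y.1 := congrArg Subtype.val hy
    refine ⟨y.1, y.2, ?_⟩
    have hhy : h y.1 = (1 - t) • (w0 - g y.1) := by
      have lem : ∀ a : Fin p → ℝ, (w0 + t • (a - w0)) - a = (1 - t) • (w0 - a) := by
        intro a; rw [sub_smul, one_smul, smul_sub, smul_sub]; abel
      set A := g y.1 with hA
      have h6 : h y.1 = y.1 - A := by rw [hA, hg]; simp
      rw [h6, ← hyfix]
      exact lem A
    have hgy : ‖w0 - g y.1‖ ≤ ε := by
      rw [norm_sub_rev]
      refine hself y.1 ?_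
      have := y.2
      simp only [hs, Metric.mem_closedBall, dist_eq_norm] at this
      exact this
    calc ‖h y.1‖ = (1 - t) * ‖w0 - g y.1‖ := by
          rw [hhy, norm_smul, Real.norm_eq_abs, abs_of_nonneg (by linarith)]
      _ ≤ (1 - t) * ε := mul_le_mul_of_nonneg_left hgy (by linarith)
      _ = ε / (n + 1) := by rw [h1t]; ring
  -- minimum of ‖h‖ on the compact ball is a zero
  obtain ⟨wstar, hwmem, hwmin⟩ := (isCompact_closedBall w0 ε).exists_isMinOn
    ⟨w0, Metric.mem_closedBall_self hε.le⟩ (hdiff.continuous.norm.continuousOn)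
  have hzero : ‖h wstar‖ = 0 := by
    by_contra hne
    have hpos : 0 < ‖h wstar‖ := lt_of_le_of_ne (norm_nonneg _) (Ne.symm hne)
    obtain ⟨n, hn⟩ := exists_nat_gt (ε / ‖h wstar‖)
    obtain ⟨x, hxmem, hxle⟩ := exist_n n
    have hmin : ‖h wstar‖ ≤ ‖h x‖ := hwmin hxmem
    have hlt : ε / (n + 1) < ‖h wstar‖ := by
      rw [div_lt_iff₀ (by positivity)]
      have h' : ε / ‖h wstar‖ < (n:ℝ) + 1 := hn.trans (lt_add_one _)
      calc ε = ε / ‖h wstar‖ * ‖h wstar‖ := by field_simp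
        _ < ((n:ℝ) + 1) * ‖h wstar‖ := by nlinarith
        _ = ‖h wstar‖ * ((n:ℝ) + 1) := mul_comm _ _
    linarith
  refine ⟨wstar, norm_eq_zero.1 hzero, ?_⟩
  rw [Metric.mem_closedBall, dist_eq_norm] at hwmem
  exact hwmem
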